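/- For every nonnegative integer n, every real δ with sqrt(n) ≤ δ ≤ n, the function g_n(t) = t^n e^{-t}/n! satisfies g_n(n - δ) ≤ exp(-δ²/(2n)) / sqrt(n+1). -/

import Mathlib

open Real

/-- The derivative fact: `g x = (1 - x^2/2) - (1-x)*exp x` is monotone on `[0,∞)`. -/
lemma aux_one_sub_mul_exp_le (x : ℝ) (hx : 0 ≤ x) :
    (1 - x) * Real.exp x ≤ 1 - x ^ 2 / 2 := by
  have key : MonotoneOn (fun x : ℝ => (1 - x ^ 2 / 2) - (1 - x) * Real.exp x)
      (Set.Ici 0) := by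
    apply monotoneOn_of_deriv_nonneg (convex_Ici 0)
    · fun_prop
    · apply DifferentiableOn.sub
      · fun_prop
      · fun_prop
    · intro y hy
      rw [interior_Ici] at hy
      have hd : HasDerivAt (fun x : ℝ => (1 - x ^ 2 / 2) - (1 - x) * Real.exp x)
          ((-(2 * y / 2)) - ((-1) * Real.exp y + (1 - y) * Real.exp y)) y := by
        apply HasDerivAt.sub
        · simpa using ((hasDerivAt_pow 2 y).div_const 2).const_sub 1
        · exact ((hasDerivAt_id y).const_sub 1).mul (Real.hasDerivAt_exp y)
      rw [hd.deriv]
      have h1 : (1 : ℝ) + y ≤ Real.exp y := by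
        have := Real.add_one_le_exp y; linarith
      have h2 : (0 : ℝ) ≤ y := le_of_lt hy
      nlinarith [Real.exp_pos y]
  have h0 := key (Set.self_mem_Ici) (Set.mem_Ici.mpr hx) hx
  simp at h0
  linarith

lemma aux_one_sub_le_exp (x : ℝ) (hx : 0 ≤ x) :
    1 - x ≤ Real.exp (-x - x ^ 2 / 2) := by
  have h1 : (1 - x) * Real.exp x ≤ 1 - x ^ 2 / 2 := aux_one_sub_mul_exp_le x hx
  have h2 : 1 - x ^ 2 / 2 ≤ Real.exp (-(x ^ 2 / 2)) := by
    have := Real.add_one_le_exp (-(x ^ 2 / 2)); linarith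
  have hEx : (0 : ℝ) < Real.exp x := Real.exp_pos x
  have : (1 - x) * Real.exp x ≤ Real.exp (-(x ^ 2 / 2)) := h1.trans h2
  have h3 : 1 - x ≤ Real.exp (-(x ^ 2 / 2)) / Real.exp x := by
    rw [le_div_iff₀ hEx]; exact this
  rwa [← Real.exp_sub, show -(x ^ 2 / 2) - x = -x - x ^ 2 / 2 by ring] at h3

/-- Stirling-type lower bound for the factorial. -/
lemma aux_stirling (n : ℕ) (hn : 1 ≤ n) :
    Real.sqrt (n + 1) * (n : ℝ) ^ n * Real.exp (-(n : ℝ)) ≤ (Nat.factorial n : ℝ) := by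
  have hpi : Real.sqrt π ≤ Stirling.stirlingSeq n := by
    obtain ⟨m, rfl⟩ := Nat.exists_eq_add_of_le hn
    apply le_of_tendsto Stirling.tendsto_stirlingSeq_sqrt_pi
    filter_upwards [Filter.eventually_ge_atTop (1 + m)] with k hk
    obtain ⟨j, rfl⟩ := Nat.exists_eq_add_of_le (Nat.one_le_iff_ne_zero.mpr
      (by omega : k ≠ 0))
    have := Stirling.log_stirlingSeq'_antitone (by omega : m ≤ j)
    simp only [Function.comp_apply, Nat.succ_eq_add_one] at this
    have hpos1 : 0 < Stirling.stirlingSeq (m + 1) := Stirling.stirlingSeq'_pos m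
    have hpos2 : 0 < Stirling.stirlingSeq (j + 1) := Stirling.stirlingSeq'_pos j
    rw [Real.log_le_log_iff hpos2 hpos1] at this
    rw [show 1 + m = m + 1 by omega, show 1 + j = j + 1 by omega]; exact this
  have hnR : (1 : ℝ) ≤ (n : ℝ) := by exact_mod_cast hn
  have hden : (0 : ℝ) < Real.sqrt (2 * n) * ((n : ℝ) / Real.exp 1) ^ n := by
    positivity
  have hseq : Stirling.stirlingSeq n =
      (Nat.factorial n : ℝ) / (Real.sqrt (2 * n) * ((n : ℝ) / Real.exp 1) ^ n) := rfl
  rw [hseq, le_div_iff₀ hden] at hpi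
  have hkey : Real.sqrt (n + 1) ≤ Real.sqrt π * Real.sqrt (2 * n) := by
    rw [← Real.sqrt_mul (le_of_lt Real.pi_pos)]
    apply Real.sqrt_le_sqrt
    nlinarith [Real.pi_gt_three]
  have hpow : ((n : ℝ) / Real.exp 1) ^ n = (n : ℝ) ^ n * Real.exp (-(n : ℝ)) := by
    rw [div_pow, Real.exp_neg, ← Real.exp_nat_mul]
    field_simp
  calc Real.sqrt (n + 1) * (n : ℝ) ^ n * Real.exp (-(n : ℝ))
      ≤ Real.sqrt π * Real.sqrt (2 * n) * ((n : ℝ) ^ n * Real.exp (-(n : ℝ))) := by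
        have : (0 : ℝ) ≤ (n : ℝ) ^ n * Real.exp (-(n : ℝ)) := by positivity
        nlinarith [this, hkey]
    _ = Real.sqrt π * (Real.sqrt (2 * n) * ((n : ℝ) / Real.exp 1) ^ n) := by
        rw [hpow]; ring
    _ ≤ (Nat.factorial n : ℝ) := hpi

theorem stmt_15 (n : ℕ) (δ : ℝ) (h1 : Real.sqrt n ≤ δ) (h2 : δ ≤ n) :
    ((n : ℝ) - δ) ^ n * Real.exp (-((n : ℝ) - δ)) / (Nat.factorial n : ℝ) ≤
      Real.exp (-δ ^ 2 / (2 * n)) / Real.sqrt (n + 1) := by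
  rcases Nat.eq_zero_or_pos n with hn0 | hn
  · subst hn0
    have hδ : δ = 0 := le_antisymm (by exact_mod_cast h2)
      (le_trans (Real.sqrt_nonneg _) h1)
    subst hδ
    norm_num
  · have hn1 : 1 ≤ n := hn
    have hnR : (1 : ℝ) ≤ (n : ℝ) := by exact_mod_cast hn1
    have hnpos : (0 : ℝ) < n := by linarith
    have hδ0 : 0 ≤ δ := le_trans (Real.sqrt_nonneg _) h1
    have ht : 0 ≤ (n : ℝ) - δ := by linarith
    set x : ℝ := δ / n with hxdef
    have hx0 : 0 ≤ x := by positivity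
    have hx1 : x ≤ 1 := by rw [hxdef, div_le_one hnpos]; exact h2
    have hδx : δ = n * x := by rw [hxdef]; field_simp
    -- key pointwise bound
    have hkey : (1 - x) ^ n ≤ Real.exp (-δ - δ ^ 2 / (2 * n)) := by
      have h1x : 1 - x ≤ Real.exp (-x - x ^ 2 / 2) := aux_one_sub_le_exp x hx0
      have := pow_le_pow_left₀ (by linarith : (0:ℝ) ≤ 1 - x) h1x n
      rw [← Real.exp_nat_mul] at this
      have harg : (n : ℝ) * (-x - x ^ 2 / 2) = -δ - δ ^ 2 / (2 * n) := by
        rw [hδx]; field_simp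
      rwa [harg] at this
    -- numerator bound
    have hnum : ((n : ℝ) - δ) ^ n * Real.exp (-((n : ℝ) - δ)) ≤
        Real.exp (-δ ^ 2 / (2 * n)) * ((n : ℝ) ^ n * Real.exp (-(n : ℝ))) := by
      have hsub : (n : ℝ) - δ = n * (1 - x) := by rw [hδx]; ring
      rw [hsub, mul_pow]
      have h1 : (n : ℝ) ^ n * (1 - x) ^ n ≤
          (n : ℝ) ^ n * Real.exp (-δ - δ ^ 2 / (2 * n)) :=
        mul_le_mul_of_nonneg_left hkey (by positivity)
      have h2' : Real.exp (-((n : ℝ) * (1 - x))) = Real.exp (δ - n) := by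
        rw [hδx]; ring_nf
      calc (n : ℝ) ^ n * (1 - x) ^ n * Real.exp (-((n : ℝ) * (1 - x)))
          ≤ (n : ℝ) ^ n * Real.exp (-δ - δ ^ 2 / (2 * n)) * Real.exp (δ - n) := by
            rw [h2']
            exact mul_le_mul_of_nonneg_right h1 (le_of_lt (Real.exp_pos _))
        _ = Real.exp (-δ ^ 2 / (2 * n)) * ((n : ℝ) ^ n * Real.exp (-(n : ℝ))) := by
            rw [mul_assoc, ← Real.exp_add,
              show -δ - δ ^ 2 / (2 * (n:ℝ)) + (δ - n) = -δ ^ 2 / (2 * (n:ℝ)) + -(n:ℝ) by ring,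
              Real.exp_add]
            ring
    have hfac := aux_stirling n hn1
    have hdpos : (0 : ℝ) < Real.sqrt (n + 1) * (n : ℝ) ^ n * Real.exp (-(n : ℝ)) := by
      have : (0:ℝ) < Real.sqrt (n+1) := Real.sqrt_pos.mpr (by positivity)
      positivity
    have hnum0 : 0 ≤ ((n : ℝ) - δ) ^ n * Real.exp (-((n : ℝ) - δ)) := by positivity
    calc ((n : ℝ) - δ) ^ n * Real.exp (-((n : ℝ) - δ)) / (Nat.factorial n : ℝ)
        ≤ ((n : ℝ) - δ) ^ n * Real.exp (-((n : ℝ) - δ)) /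
            (Real.sqrt (n + 1) * (n : ℝ) ^ n * Real.exp (-(n : ℝ))) :=
          div_le_div_of_nonneg_left hnum0 hdpos hfac
      _ ≤ (Real.exp (-δ ^ 2 / (2 * n)) * ((n : ℝ) ^ n * Real.exp (-(n : ℝ)))) /
            (Real.sqrt (n + 1) * (n : ℝ) ^ n * Real.exp (-(n : ℝ))) :=
          by gcongr
      _ = Real.exp (-δ ^ 2 / (2 * n)) / Real.sqrt (n + 1) := by
          have hs : (0:ℝ) < Real.sqrt (n+1) := Real.sqrt_pos.mpr (by positivity)
          field_simp
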